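/- For a connected graph G, β'(G) = n(G) if and only if every vertex of G is a twin vertex, where n(G) is the order of G. -/

import Mathlib

open SimpleGraph

variable {V : Type*}

/-- `S` is a resolving set of `G`. -/
def ResSet (G : SimpleGraph V) (S : Set V) : Prop :=
  ∀ x y : V, x ≠ y → ∃ w ∈ S, G.dist x w ≠ G.dist y w

/-- `S` is a fault-tolerant resolving set of `G`. -/
def FTResSet (G : SimpleGraph V) (S : Set V) : Prop :=
  ResSet G S ∧ ∀ x ∈ S, ResSet G (S \ {x})

/-- Metric dimension. -/
noncomputable def md (G : SimpleGraph V) : ℕ :=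
  sInf {n | ∃ S : Set V, S.ncard = n ∧ ResSet G S}

/-- Fault-tolerant metric dimension. -/
noncomputable def ftmd (G : SimpleGraph V) : ℕ :=
  sInf {n | ∃ S : Set V, S.ncard = n ∧ FTResSet G S}

/-- `u` and `v` are twins: distinct and with equal open or equal closed neighborhoods. -/
def IsTwinPair (G : SimpleGraph V) (u v : V) : Prop :=
  u ≠ v ∧ (G.neighborSet u = G.neighborSet v ∨
    G.neighborSet u ∪ {u} = G.neighborSet v ∪ {v})

/-- `u` is a twin vertex. -/
def IsTwin (G : SimpleGraph V) (u : V) : Prop := ∃ v, IsTwinPair G u v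

-- adjacency transfer for twins
lemma twin_adj {G : SimpleGraph V} {u v w : V} (h : IsTwinPair G u v)
    (hwu : w ≠ u) (hwv : w ≠ v) (ha : G.Adj u w) : G.Adj v w := by
  obtain ⟨huv, hN | hN⟩ := h
  · have : w ∈ G.neighborSet v := hN ▸ ha
    exact this
  · have : w ∈ G.neighborSet u ∪ {u} := Or.inl ha
    rw [hN] at this
    rcases this with h1 | h1
    · exact h1
    · exact absurd h1 hwv

lemma twin_symm {G : SimpleGraph V} {u v : V} (h : IsTwinPair G u v) : IsTwinPair G v u := by
  obtain ⟨huv, hN | hN⟩ := h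
  exacts [⟨huv.symm, Or.inl hN.symm⟩, ⟨huv.symm, Or.inr hN.symm⟩]

-- twins have equal distances to other vertices
lemma twin_dist_le {G : SimpleGraph V} (hG : G.Connected) {u v w : V}
    (h : IsTwinPair G u v) (hwu : w ≠ u) (hwv : w ≠ v) :
    G.dist v w ≤ G.dist u w := by
  obtain ⟨p, hp⟩ := hG.exists_walk_length_eq_dist u w
  cases p with
  | nil => exact absurd rfl hwu.symm
  | cons ha q =>
    rename_i a
    by_cases hav : a = v
    · subst hav
      have h1 := SimpleGraph.dist_le q
      have h2 : q.length + 1 = G.dist u w := by simpa using hp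
      omega
    · have ha' : G.Adj v a := by
        exact twin_adj h (fun hh => (G.ne_of_adj ha) hh.symm) hav ha
      calc G.dist v w ≤ (SimpleGraph.Walk.cons ha' q).length := SimpleGraph.dist_le _
        _ = G.dist u w := by rw [← hp]; simp

lemma twin_dist {G : SimpleGraph V} (hG : G.Connected) {u v w : V}
    (h : IsTwinPair G u v) (hwu : w ≠ u) (hwv : w ≠ v) :
    G.dist u w = G.dist v w :=
  le_antisymm (twin_dist_le hG (twin_symm h) hwv hwu) (twin_dist_le hG h hwu hwv)

-- a resolving set must meet every twin pair
lemma res_mem_twin {G : SimpleGraph V} (hG : G.Connected) {S : Set V} (hS : ResSet G S)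
    {u v : V} (h : IsTwinPair G u v) : u ∈ S ∨ v ∈ S := by
  obtain ⟨w, hwS, hw⟩ := hS u v h.1
  by_cases hwu : w = u
  · exact Or.inl (hwu ▸ hwS)
  by_cases hwv : w = v
  · exact Or.inr (hwv ▸ hwS)
  · exact absurd (twin_dist hG h hwu hwv) hw

-- if u is not a twin, any x ≠ u can be distinguished from u by a vertex outside {u,x}
lemma not_twin_exists {G : SimpleGraph V} (hG : G.Connected) {u : V} (hu : ¬IsTwin G u)
    {x : V} (hx : x ≠ u) : ∃ w, w ≠ u ∧ w ≠ x ∧ G.dist u w ≠ G.dist x w := by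
  by_contra hc
  push_neg at hc
  apply hu
  refine ⟨x, hx.symm, ?_⟩
  have key : ∀ w, w ≠ u → w ≠ x → (G.Adj u w ↔ G.Adj x w) := by
    intro w hwu hwx
    have := hc w hwu hwx
    rw [← SimpleGraph.dist_eq_one_iff_adj, ← SimpleGraph.dist_eq_one_iff_adj, this]
  by_cases hadj : G.Adj u x
  · right
    ext w
    simp only [Set.mem_union, SimpleGraph.mem_neighborSet, Set.mem_singleton_iff]
    by_cases hwu : w = u
    · rw [hwu]; simp [hadj.symm]
    by_cases hwx : w = x
    · rw [hwx]; simp [hadj]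
    · rw [key w hwu hwx]; tauto
  · left
    ext w
    simp only [SimpleGraph.mem_neighborSet]
    by_cases hwu : w = u
    · rw [hwu]
      simp only [G.loopless.irrefl u, false_iff]
      exact fun hh => hadj hh.symm
    by_cases hwx : w = x
    · rw [hwx]
      simp only [G.loopless.irrefl x, iff_false]
      exact hadj
    · exact key w hwu hwx

-- univ is always FT resolving
lemma ft_univ {G : SimpleGraph V} (hG : G.Connected) : FTResSet G (Set.univ : Set V) := by
  have base : ∀ (T : Set V), (∀ a b : V, a ≠ b → a ∈ T ∨ b ∈ T) → ResSet G T := by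
    intro T hT a b hab
    rcases hT a b hab with h | h
    · exact ⟨a, h, by rw [SimpleGraph.dist_self]; exact (hG.pos_dist_of_ne hab.symm).ne⟩
    · exact ⟨b, h, by rw [SimpleGraph.dist_self]; exact (hG.pos_dist_of_ne hab).ne'⟩
  constructor
  · exact base _ (fun a b _ => Or.inl trivial)
  · intro x _
    apply base
    intro a b hab
    by_cases hax : a = x
    · exact Or.inr ⟨trivial, by rintro rfl; exact hab (hax ▸ rfl)⟩
    · exact Or.inl ⟨trivial, hax⟩

-- if u is not a twin, univ \ {u} is FT resolving
lemma ft_compl {G : SimpleGraph V} (hG : G.Connected) {u : V} (hu : ¬IsTwin G u) :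
    FTResSet G ((Set.univ : Set V) \ {u}) := by
  have main : ∀ (x : V), x ≠ u → ResSet G ((Set.univ \ {u}) \ {x}) := by
    intro x hx a b hab
    by_cases hau : a ≠ u ∧ a ≠ x
    · exact ⟨a, ⟨⟨trivial, hau.1⟩, hau.2⟩,
        by rw [SimpleGraph.dist_self]; exact (hG.pos_dist_of_ne hab.symm).ne⟩
    by_cases hbu : b ≠ u ∧ b ≠ x
    · exact ⟨b, ⟨⟨trivial, hbu.1⟩, hbu.2⟩,
        by rw [SimpleGraph.dist_self]; exact (hG.pos_dist_of_ne hab).ne'⟩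
    -- now {a,b} = {u,x}
    push_neg at hau hbu
    by_cases h1 : a = u
    · subst h1
      have hbx : b = x := hbu (Ne.symm hab)
      subst hbx
      obtain ⟨w, hw1, hw2, hw3⟩ := not_twin_exists hG hu hx
      exact ⟨w, ⟨⟨trivial, hw1⟩, hw2⟩, hw3⟩
    · have hax : a = x := hau h1
      subst hax
      by_cases h2 : b = u
      · subst h2
        obtain ⟨w, hw1, hw2, hw3⟩ := not_twin_exists hG hu hx
        exact ⟨w, ⟨⟨trivial, hw1⟩, hw2⟩, fun hh => hw3 hh.symm⟩
      · exact absurd (hbu h2) (Ne.symm hab)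
  constructor
  · intro a b hab
    by_cases hau : a = u
    · subst hau
      have hbu : b ≠ a := hab.symm
      obtain ⟨w, hw1, hw2, hw3⟩ := not_twin_exists hG hu hbu
      exact ⟨w, ⟨trivial, hw1⟩, hw3⟩
    · exact ⟨a, ⟨trivial, hau⟩,
        by rw [SimpleGraph.dist_self]; exact (hG.pos_dist_of_ne hab.symm).ne⟩
  · intro x hxS
    exact main x hxS.2

theorem ftmd_eq_order_iff [Fintype V] (G : SimpleGraph V) (hG : G.Connected) :
    ftmd G = Fintype.card V ↔ ∀ u : V, IsTwin G u := by
  constructor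
  · intro h
    by_contra hc
    push_neg at hc
    obtain ⟨u, hu⟩ := hc
    have hmem : (Fintype.card V - 1) ∈ {n | ∃ S : Set V, S.ncard = n ∧ FTResSet G S} := by
      refine ⟨Set.univ \ {u}, ?_, ft_compl hG hu⟩
      rw [Set.ncard_diff (by simp), Set.ncard_univ, Set.ncard_singleton, Nat.card_eq_fintype_card]
    have hle : ftmd G ≤ Fintype.card V - 1 := Nat.sInf_le hmem
    have hpos : 0 < Fintype.card V := Fintype.card_pos_iff.mpr hG.nonempty
    omega
  · intro h
    have huniv : ∀ S : Set V, FTResSet G S → S = Set.univ := by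
      intro S hS
      by_contra hne
      obtain ⟨u, -, hu⟩ := Set.exists_of_ssubset (Set.ssubset_univ_iff.mpr hne)
      obtain ⟨v, hv⟩ := h u
      have hvS : v ∈ S := by
        rcases res_mem_twin hG hS.1 hv with h1 | h1
        · exact absurd h1 hu
        · exact h1
      have := hS.2 v hvS
      rcases res_mem_twin hG this hv with h1 | h1
      · exact hu h1.1
      · exact h1.2 rfl
    have : {n | ∃ S : Set V, S.ncard = n ∧ FTResSet G S} = {Fintype.card V} := by
      ext n
      simp only [Set.mem_setOf_eq, Set.mem_singleton_iff]
      constructor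
      · rintro ⟨S, rfl, hS⟩
        rw [huniv S hS, Set.ncard_univ, Nat.card_eq_fintype_card]
      · rintro rfl
        exact ⟨Set.univ, by rw [Set.ncard_univ, Nat.card_eq_fintype_card], ft_univ hG⟩
    rw [ftmd, this, csInf_singleton]
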